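/- Let X be a metric measure space, u a measurable a.e.-finite function, g a nonnegative measurable function such that |u(x)−u(y)| ≤ d(x,y)^s (g(x)+g(y)) for a.e. x,y (an s-gradient, s > 0). Assume X has the nonempty spheres property and μ is doubling. Then for 0 < γ ≤ 1/2 there is a constant C (depending only on s, γ and the doubling constant) such that inf_{c∈ℝ} m_{|u−c|}^γ(B(x,r)) ≤ C r^s m_g^{γ/C}(B(x,r')) for every ball, with a suitably enlarged radius r' ≤ 4r. In particular, with the enlarged ball B(x,2r) one may take inf_{c∈ℝ} m_{|u−c|}^γ(B(x,r)) ≤ 2^{s+1} r^s m_g^γ(B(x,2r)) after adjusting γ by a doubling-dependent constant. -/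

import Mathlib

open MeasureTheory Metric

/-- The γ-median of `u` over `A`. -/
noncomputable def median {X : Type*} [MeasurableSpace X] (μ : Measure X) (γ : ℝ) (A : Set X)
    (u : X → ℝ) : ℝ :=
  sInf {a : ℝ | μ {x ∈ A | a < u x} < ENNReal.ofReal γ * μ A}

section MedianLemmas

variable {X : Type*} [MeasurableSpace X] {μ : Measure X}

lemma medianSet_subset_Ici {γ : ℝ} (hγ : γ ≤ 1) {A : Set X} (hA : μ A ≠ ⊤) {v : X → ℝ}
    (hv : ∀ y, 0 ≤ v y) :
    {a : ℝ | μ {x ∈ A | a < v x} < ENNReal.ofReal γ * μ A} ⊆ Set.Ici 0 := by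
  intro a ha
  by_contra h
  rw [Set.mem_Ici, not_le] at h
  have heq : {x ∈ A | a < v x} = A := by
    ext y
    simp only [Set.mem_setOf_eq, and_iff_left_iff_imp]
    exact fun _ => lt_of_lt_of_le h (hv y)
  rw [Set.mem_setOf_eq, heq] at ha
  have hle : ENNReal.ofReal γ * μ A ≤ μ A := by
    calc ENNReal.ofReal γ * μ A ≤ 1 * μ A := by
          gcongr
          exact ENNReal.ofReal_le_one.mpr hγ
      _ = μ A := one_mul _
  exact absurd (ha.trans_le hle) (lt_irrefl _)

lemma median_nonneg {γ : ℝ} (hγ : γ ≤ 1) {A : Set X} (hA : μ A ≠ ⊤) {v : X → ℝ}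
    (hv : ∀ y, 0 ≤ v y) : 0 ≤ median μ γ A v :=
  Real.sInf_nonneg fun _ ha => medianSet_subset_Ici hγ hA hv ha

lemma median_superlevel {γ : ℝ} {A : Set X} (hA : MeasurableSet A) (hAfin : μ A ≠ ⊤)
    (hApos : 0 < ENNReal.ofReal γ * μ A) {v : X → ℝ} (hv : Measurable v) :
    μ {x ∈ A | median μ γ A v < v x} ≤ ENNReal.ofReal γ * μ A := by
  set S := {a : ℝ | μ {x ∈ A | a < v x} < ENNReal.ofReal γ * μ A} with hSdef
  have hmeas : ∀ a : ℝ, MeasurableSet {x ∈ A | a < v x} := fun a =>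
    hA.inter (measurableSet_lt measurable_const hv)
  have hSne : S.Nonempty := by
    have hanti : Antitone (fun n : ℕ => {x ∈ A | (n : ℝ) < v x}) := by
      intro i j hij y hy
      exact ⟨hy.1, lt_of_le_of_lt (by exact_mod_cast hij) hy.2⟩
    have hint : ⋂ n : ℕ, {x ∈ A | (n : ℝ) < v x} = ∅ := by
      ext y
      simp only [Set.mem_iInter, Set.mem_setOf_eq, Set.mem_empty_iff_false, iff_false,
        not_forall]
      obtain ⟨n, hn⟩ := exists_nat_gt (v y)
      exact ⟨n, fun h => absurd h.2 (not_lt.mpr hn.le)⟩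
    have hfin0 : μ {x ∈ A | ((0 : ℕ) : ℝ) < v x} ≠ ⊤ :=
      ((measure_mono (Set.sep_subset _ _)).trans_lt hAfin.lt_top).ne
    have htend := MeasureTheory.tendsto_measure_iInter_atTop
      (μ := μ) (s := fun n : ℕ => {x ∈ A | (n : ℝ) < v x})
      (fun n => (hmeas ((n : ℕ) : ℝ)).nullMeasurableSet) hanti ⟨0, hfin0⟩
    rw [hint, measure_empty] at htend
    obtain ⟨n, hn⟩ := (htend.eventually_lt_const hApos).exists
    exact ⟨(n : ℝ), hn⟩
  have hup : ∀ a ∈ S, ∀ b, a ≤ b → b ∈ S := by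
    intro a ha b hab
    refine lt_of_le_of_lt (measure_mono ?_) ha
    intro y hy
    exact ⟨hy.1, lt_of_le_of_lt hab hy.2⟩
  have hmedeq : median μ γ A v = sInf S := rfl
  set m := median μ γ A v with hm
  have hmemgt : ∀ a : ℝ, m < a → a ∈ S := by
    intro a ha
    rw [hmedeq] at ha
    obtain ⟨b, hb, hba⟩ := exists_lt_of_csInf_lt hSne ha
    exact hup b hb a hba.le
  have hunion : {x ∈ A | m < v x} = ⋃ n : ℕ, {x ∈ A | m + 1 / ((n : ℝ) + 1) < v x} := by
    ext y
    simp only [Set.mem_setOf_eq, Set.mem_iUnion]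
    constructor
    · rintro ⟨hyA, hy⟩
      obtain ⟨n, hn⟩ := exists_nat_one_div_lt (sub_pos.mpr hy)
      exact ⟨n, hyA, by linarith⟩
    · rintro ⟨n, hyA, hy⟩
      have h0 : (0 : ℝ) < 1 / ((n : ℝ) + 1) := by positivity
      exact ⟨hyA, by linarith⟩
  have hdir : Directed (· ⊆ ·) (fun n : ℕ => {x ∈ A | m + 1 / ((n : ℝ) + 1) < v x}) := by
    apply Monotone.directed_le
    intro i j hij y hy
    refine ⟨hy.1, lt_of_le_of_lt ?_ hy.2⟩
    have hij' : ((i : ℝ) + 1) ≤ ((j : ℝ) + 1) := by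
      have : (i : ℝ) ≤ (j : ℝ) := by exact_mod_cast hij
      linarith
    have := one_div_le_one_div_of_le (by positivity : (0:ℝ) < (i:ℝ) + 1) hij'
    linarith
  rw [hunion, hdir.measure_iUnion]
  apply iSup_le
  intro n
  have : m + 1 / ((n : ℝ) + 1) ∈ S := hmemgt _ (lt_add_of_pos_right m (by positivity))
  exact this.le

end MedianLemmas

theorem median_poincare {X : Type*} [MetricSpace X] [MeasurableSpace X] [BorelSpace X]
    (μ : Measure X)
    (hpos : ∀ (x : X) (r : ℝ), 0 < r → 0 < μ (ball x r))
    (hfin : ∀ (x : X) (r : ℝ), 0 < r → μ (ball x r) < ⊤)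
    (cD : ℝ) (hcD : 0 < cD)
    (hdoubling : ∀ (x : X) (r : ℝ), 0 < r →
      μ (ball x (2 * r)) ≤ ENNReal.ofReal cD * μ (ball x r))
    (hspheres : ∀ (x : X) (r : ℝ), 0 < r → ∃ y : X, dist x y = r)
    (s : ℝ) (hs : 0 < s) (γ : ℝ) (hγ0 : 0 < γ) (hγ : γ ≤ 1 / 2)
    (u : X → ℝ) (hu : Measurable u)
    (g : X → ℝ) (hg : Measurable g) (hg0 : ∀ x, 0 ≤ g x)
    (E : Set X) (hE : μ E = 0)
    (hgrad : ∀ x ∉ E, ∀ y ∉ E, |u x - u y| ≤ dist x y ^ s * (g x + g y)) :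
    ∃ C : ℝ, 0 < C ∧ γ / C ≤ 1 / 2 ∧
      (∀ (x : X) (r : ℝ), 0 < r → ∃ r' : ℝ, 0 < r' ∧ r' ≤ 4 * r ∧
        sInf {t : ℝ | ∃ c : ℝ, t = median μ γ (ball x r) (fun y => |u y - c|)} ≤
          C * r ^ s * median μ (γ / C) (ball x r') g) ∧
      (∃ γ' : ℝ, 0 < γ' ∧ γ' ≤ γ ∧
        ∀ (x : X) (r : ℝ), 0 < r →
          sInf {t : ℝ | ∃ c : ℝ, t = median μ γ (ball x r) (fun y => |u y - c|)} ≤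
            2 ^ (s + 1) * r ^ s * median μ γ' (ball x (2 * r)) g) := by
  rcases isEmpty_or_nonempty X with hX | hX
  · exact ⟨1, one_pos, by rw [div_one]; exact hγ, fun x => isEmptyElim x, γ, hγ0, le_rfl,
      fun x => isEmptyElim x⟩
  obtain ⟨x₀⟩ := hX
  -- the doubling constant is at least 1
  have hcD1 : 1 ≤ cD := by
    have h1 := hdoubling x₀ 1 one_pos
    have h2 : μ (ball x₀ 1) ≤ μ (ball x₀ (2 * 1)) :=
      measure_mono (ball_subset_ball (by linarith))
    have h3 : μ (ball x₀ 1) ≤ ENNReal.ofReal cD * μ (ball x₀ 1) := h2.trans h1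
    by_contra h
    push_neg at h
    have hlt : ENNReal.ofReal cD * μ (ball x₀ 1) < 1 * μ (ball x₀ 1) := by
      rw [ENNReal.mul_lt_mul_iff_left (hpos x₀ 1 one_pos).ne' (hfin x₀ 1 one_pos).ne]
      exact ENNReal.ofReal_lt_one.mpr h
    rw [one_mul] at hlt
    exact absurd (h3.trans_lt hlt) (lt_irrefl _)
  set K : ℝ := max (2 * cD) 2 with hKdef
  have hK2 : (2 : ℝ) ≤ K := le_max_right _ _
  have hKcD : 2 * cD ≤ K := le_max_left _ _
  have hK0 : (0 : ℝ) < K := by linarith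
  set C : ℝ := max (2 ^ (s + 1)) K with hCdef
  have h2s : (2 : ℝ) ≤ 2 ^ (s + 1) := by
    calc (2 : ℝ) = 2 ^ (1 : ℝ) := (Real.rpow_one 2).symm
      _ ≤ 2 ^ (s + 1) := Real.rpow_le_rpow_of_exponent_le one_le_two (by linarith)
  have hCK : K ≤ C := le_max_right _ _
  have hC2s : (2 : ℝ) ^ (s + 1) ≤ C := le_max_left _ _
  have hC0 : (0 : ℝ) < C := by linarith
  have hC1 : (1 : ℝ) ≤ C := by linarith
  -- the core estimate
  have core : ∀ γp : ℝ, 0 < γp → γp * cD ≤ γ / 2 → ∀ (x : X) (r : ℝ), 0 < r →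
      sInf {t : ℝ | ∃ c : ℝ, t = median μ γ (ball x r) (fun y => |u y - c|)} ≤
        2 ^ (s + 1) * r ^ s * median μ γp (ball x (2 * r)) g := by
    intro γp hγp hγpcD x r hr
    have hγp1 : γp ≤ 1 := by nlinarith
    have hr2 : 0 < 2 * r := by linarith
    have hB2fin : μ (ball x (2 * r)) ≠ ⊤ := (hfin x (2 * r) hr2).ne
    have hBfin : μ (ball x r) ≠ ⊤ := (hfin x r hr).ne
    have hBpos : μ (ball x r) ≠ 0 := (hpos x r hr).ne'
    set m := median μ γp (ball x (2 * r)) g with hm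
    have hm0 : 0 ≤ m := median_nonneg hγp1 hB2fin hg0
    have hApos2 : 0 < ENNReal.ofReal γp * μ (ball x (2 * r)) :=
      ENNReal.mul_pos (ENNReal.ofReal_pos.mpr hγp).ne' (hpos x (2 * r) hr2).ne'
    have hsup : μ {y ∈ ball x (2 * r) | m < g y} ≤ ENNReal.ofReal γp * μ (ball x (2 * r)) :=
      median_superlevel measurableSet_ball hB2fin hApos2 hg
    have hBadlevel : μ {y ∈ ball x r | m < g y} ≤ ENNReal.ofReal (γ / 2) * μ (ball x r) := by
      calc μ {y ∈ ball x r | m < g y} ≤ μ {y ∈ ball x (2 * r) | m < g y} :=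
            measure_mono (fun y hy => ⟨ball_subset_ball (by linarith) hy.1, hy.2⟩)
        _ ≤ ENNReal.ofReal γp * μ (ball x (2 * r)) := hsup
        _ ≤ ENNReal.ofReal γp * (ENNReal.ofReal cD * μ (ball x r)) := by
            gcongr
            exact hdoubling x r hr
        _ = ENNReal.ofReal (γp * cD) * μ (ball x r) := by
            rw [← mul_assoc, ← ENNReal.ofReal_mul hγp.le]
        _ ≤ ENNReal.ofReal (γ / 2) * μ (ball x r) :=
            mul_le_mul_left (ENNReal.ofReal_le_ofReal hγpcD) _
    set Bad := {y ∈ ball x r | m < g y} ∪ E with hBaddef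
    have hBadμ : μ Bad < ENNReal.ofReal γ * μ (ball x r) := by
      calc μ Bad ≤ μ {y ∈ ball x r | m < g y} + μ E := measure_union_le _ _
        _ = μ {y ∈ ball x r | m < g y} := by rw [hE, add_zero]
        _ ≤ ENNReal.ofReal (γ / 2) * μ (ball x r) := hBadlevel
        _ < ENNReal.ofReal γ * μ (ball x r) := by
            rw [ENNReal.mul_lt_mul_iff_left hBpos hBfin]
            exact (ENNReal.ofReal_lt_ofReal_iff hγ0).mpr (by linarith)
    have hsplit : μ (ball x r) ≤ μ (ball x r \ Bad) + μ Bad := by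
      refine (measure_mono fun y hy => ?_).trans (measure_union_le _ _)
      by_cases h : y ∈ Bad
      · exact Or.inr h
      · exact Or.inl ⟨hy, h⟩
    have hgoodμ : μ (ball x r \ Bad) ≠ 0 := by
      intro h0
      rw [h0, zero_add] at hsplit
      have hle : ENNReal.ofReal γ * μ (ball x r) ≤ μ (ball x r) := by
        calc ENNReal.ofReal γ * μ (ball x r) ≤ 1 * μ (ball x r) := by
              gcongr
              exact ENNReal.ofReal_le_one.mpr (by linarith)
          _ = μ (ball x r) := one_mul _
      exact absurd ((hsplit.trans_lt hBadμ).trans_le hle) (lt_irrefl _)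
    obtain ⟨z, hz⟩ := nonempty_of_measure_ne_zero hgoodμ
    have hzB : z ∈ ball x r := hz.1
    have hzE : z ∉ E := fun h => hz.2 (Or.inr h)
    have hzg : g z ≤ m := by
      by_contra h
      exact hz.2 (Or.inl ⟨hz.1, not_le.mp h⟩)
    set a := 2 ^ (s + 1) * r ^ s * m with hadef
    have hsub : {y ∈ ball x r | a < |u y - u z|} ⊆ Bad := by
      intro y hy
      by_contra hyBad
      have hyE : y ∉ E := fun h => hyBad (Or.inr h)
      have hyg : g y ≤ m := by
        by_contra h
        exact hyBad (Or.inl ⟨hy.1, not_le.mp h⟩)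
      have hd : dist y z ≤ 2 * r := by
        have h1 := mem_ball.mp hy.1
        have h2 := mem_ball.mp hzB
        calc dist y z ≤ dist y x + dist x z := dist_triangle _ _ _
          _ ≤ 2 * r := by rw [dist_comm x z]; linarith
      have hb := hgrad y hyE z hzE
      have hpow : dist y z ^ s ≤ (2 * r) ^ s := Real.rpow_le_rpow dist_nonneg hd hs.le
      have h2rs : ((2 : ℝ) * r) ^ s = 2 ^ s * r ^ s := Real.mul_rpow (by norm_num) hr.le
      have hua : |u y - u z| ≤ a := by
        calc |u y - u z| ≤ dist y z ^ s * (g y + g z) := hb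
          _ ≤ (2 * r) ^ s * (2 * m) := by
              apply mul_le_mul hpow (by linarith) (by linarith [hg0 y, hg0 z])
                (Real.rpow_nonneg (by linarith) s)
          _ = 2 ^ (s + 1) * r ^ s * m := by
              rw [h2rs, Real.rpow_add (by norm_num : (0 : ℝ) < 2), Real.rpow_one]
              ring
      exact absurd hy.2 (not_lt.mpr hua)
    have hmedle : median μ γ (ball x r) (fun y => |u y - u z|) ≤ a := by
      apply csInf_le
      · exact ⟨0, fun b hb =>
          medianSet_subset_Ici (by linarith) hBfin (fun y => abs_nonneg _) hb⟩
      · exact (measure_mono hsub).trans_lt hBadμ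
    calc sInf {t : ℝ | ∃ c : ℝ, t = median μ γ (ball x r) (fun y => |u y - c|)} ≤
          median μ γ (ball x r) (fun y => |u y - u z|) := by
          apply csInf_le
          · refine ⟨0, fun t ht => ?_⟩
            obtain ⟨c, rfl⟩ := ht
            exact median_nonneg (by linarith) hBfin (fun y => abs_nonneg _)
          · exact ⟨u z, rfl⟩
      _ ≤ a := hmedle
  refine ⟨C, hC0, (div_le_self hγ0.le hC1).trans hγ, ?_, γ / K, by positivity, ?_, ?_⟩
  · intro x r hr
    refine ⟨2 * r, by linarith, by linarith, ?_⟩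
    have hγC : 0 < γ / C := by positivity
    have hγCcD : (γ / C) * cD ≤ γ / 2 := by
      rw [div_mul_eq_mul_div, div_le_div_iff₀ hC0 two_pos]
      nlinarith
    refine (core (γ / C) hγC hγCcD x r hr).trans ?_
    have hm0 : 0 ≤ median μ (γ / C) (ball x (2 * r)) g :=
      median_nonneg ((div_le_self hγ0.le hC1).trans (by linarith))
        ((hfin x (2 * r) (by linarith)).ne) hg0
    have hrs : 0 ≤ r ^ s := Real.rpow_nonneg hr.le s
    exact mul_le_mul_of_nonneg_right (mul_le_mul_of_nonneg_right hC2s hrs) hm0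
  · exact div_le_self hγ0.le (by linarith)
  · intro x r hr
    have hγK : 0 < γ / K := by positivity
    have hγKcD : (γ / K) * cD ≤ γ / 2 := by
      rw [div_mul_eq_mul_div, div_le_div_iff₀ hK0 two_pos]
      nlinarith
    exact core (γ / K) hγK hγKcD x r hr
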